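/- Let G = (V, E, w) be an edge-weighted graph with positive integer edge weights, let ε and δ be reals with 0 < ε ≤ δ ≤ 1/100, and let H be a (1+δ)-spanner of G. Let F_old ⊆ E(H) and F_new ⊆ E, and suppose that for every edge (u,v) ∈ F_old there exist vertices x, y ∈ V and a walk γ from x to y all of whose edges lie in F_new, such that w(γ) ≥ w(u,v)/(3(1+ε)) and dist_G(u,x) + w(γ) + dist_G(y,v) ≤ (1+ε)·w(u,v). Then the subgraph H₁ of G with edge set F_new ∪ (E(H) ∖ F_old) satisfies dist_{H₁}(s,t) ≤ (1 + 11δ)·dist_G(s,t) for all vertices s, t ∈ V. -/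

import Mathlib

open scoped BigOperators

namespace Paper

variable {V : Type*}

/-- The weight of a walk: the sum of its edge weights, with multiplicity. -/
noncomputable def wWalk (w : V → V → ℝ) {G : SimpleGraph V} {u v : V} (p : G.Walk u v) : ℝ :=
  (p.darts.map fun d => w d.toProd.1 d.toProd.2).sum

/-- The distance between two vertices: the infimum of the weights of walks
between them, `⊤` if there is none. -/
noncomputable def gdist (G : SimpleGraph V) (w : V → V → ℝ) (u v : V) : EReal :=
  ⨅ p : G.Walk u v, (wWalk w p : EReal)

/-- `H` is a `t`-spanner of `G` with respect to the weights `w`. -/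
def IsSpanner (G : SimpleGraph V) (w : V → V → ℝ) (H : SimpleGraph V) (t : ℝ) : Prop :=
  H ≤ G ∧ ∀ u v : V, gdist H w u v ≤ (t : EReal) * gdist G w u v

/-- The total weight of the edges of a graph. -/
noncomputable def wGraph (G : SimpleGraph V) (w : V → V → ℝ)
    (hw : ∀ a b, w a b = w b a) : ℝ :=
  ∑ᶠ e ∈ G.edgeSet, Sym2.lift ⟨w, hw⟩ e

open SimpleGraph

lemma wWalk_nil {G : SimpleGraph V} {w : V → V → ℝ} {u : V} :
    wWalk w (Walk.nil : G.Walk u u) = 0 := by simp [wWalk]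

lemma wWalk_cons {G : SimpleGraph V} {w : V → V → ℝ} {u v x : V}
    (h : G.Adj u v) (p : G.Walk v x) :
    wWalk w (Walk.cons h p) = w u v + wWalk w p := by simp [wWalk]

lemma wWalk_append {G : SimpleGraph V} {w : V → V → ℝ} {u v x : V}
    (p : G.Walk u v) (q : G.Walk v x) :
    wWalk w (p.append q) = wWalk w p + wWalk w q := by
  simp [wWalk, Walk.darts_append]

lemma wWalk_transfer {G : SimpleGraph V} {w : V → V → ℝ} {u v : V} (p : G.Walk u v)
    {K : SimpleGraph V} (h : ∀ e ∈ p.edges, e ∈ K.edgeSet) :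
    wWalk w (p.transfer K h) = wWalk w p := by
  induction p with
  | nil => simp [wWalk]
  | cons h' p ih => simp only [Walk.transfer]; exact (wWalk_cons _ _).trans (by rw [ih, wWalk_cons])

lemma wWalk_nonneg {G : SimpleGraph V} {w : V → V → ℝ}
    (hpos : ∀ a b, G.Adj a b → 0 ≤ w a b) {u v : V} (p : G.Walk u v) :
    0 ≤ wWalk w p := by
  induction p with
  | nil => simp [wWalk]
  | cons h p ih => rw [wWalk_cons]; have := hpos _ _ h; linarith

lemma le_wWalk_of_dart {G : SimpleGraph V} {w : V → V → ℝ}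
    (hpos : ∀ a b, G.Adj a b → 0 ≤ w a b) {u v : V} (p : G.Walk u v)
    {d : G.Dart} (hd : d ∈ p.darts) : w d.toProd.1 d.toProd.2 ≤ wWalk w p := by
  refine List.single_le_sum ?_ _ (List.mem_map_of_mem hd)
  intro x hx
  obtain ⟨d', _, rfl⟩ := List.mem_map.mp hx
  exact hpos _ _ d'.adj

lemma wWalk_nat {G : SimpleGraph V} {w : V → V → ℝ}
    (hint : ∀ a b, G.Adj a b → ∃ m : ℕ, 1 ≤ m ∧ w a b = m) {u v : V} (p : G.Walk u v) :
    ∃ n : ℕ, wWalk w p = n := by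
  induction p with
  | nil => exact ⟨0, by simp [wWalk]⟩
  | cons h p ih =>
    obtain ⟨k, hk⟩ := ih
    obtain ⟨m, _, hm⟩ := hint _ _ h
    exact ⟨m + k, by rw [wWalk_cons, hk, hm]; push_cast; ring⟩

lemma gdist_le_wWalk {G : SimpleGraph V} {w : V → V → ℝ} {u v : V} (p : G.Walk u v) :
    gdist G w u v ≤ (wWalk w p : EReal) := iInf_le _ p

lemma gdist_nonneg' {G : SimpleGraph V} {w : V → V → ℝ}
    (hpos : ∀ a b, G.Adj a b → 0 ≤ w a b) (u v : V) :
    (0 : EReal) ≤ gdist G w u v :=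
  le_iInf fun p => by exact_mod_cast wWalk_nonneg hpos p

lemma gdist_attained {G : SimpleGraph V} {w : V → V → ℝ}
    (hint : ∀ a b, G.Adj a b → ∃ m : ℕ, 1 ≤ m ∧ w a b = m) {u v : V}
    (hne : Nonempty (G.Walk u v)) :
    ∃ (n : ℕ) (p : G.Walk u v), wWalk w p = n ∧ (∀ q : G.Walk u v, (n : ℝ) ≤ wWalk w q) ∧
      gdist G w u v = (((n : ℝ)) : EReal) := by
  classical
  set T : Set ℕ := {n | ∃ p : G.Walk u v, wWalk w p = n} with hT
  have hTne : T.Nonempty := by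
    obtain ⟨p⟩ := hne
    obtain ⟨n, hn⟩ := wWalk_nat hint p
    exact ⟨n, p, hn⟩
  obtain ⟨p, hp⟩ := Nat.sInf_mem hTne
  have hmin : ∀ q : G.Walk u v, ((sInf T : ℕ) : ℝ) ≤ wWalk w q := by
    intro q
    obtain ⟨m, hm⟩ := wWalk_nat hint q
    rw [hm]
    have : m ∈ T := ⟨q, hm⟩
    exact_mod_cast Nat.sInf_le this
  refine ⟨sInf T, p, hp, hmin, le_antisymm ?_ (le_iInf fun q => ?_)⟩
  · have := gdist_le_wWalk (w := w) p
    rwa [hp] at this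
  · exact_mod_cast hmin q

lemma walk_sum {G K : SimpleGraph V} {w : V → V → ℝ} (c : ℝ) {a b : V} (P : G.Walk a b)
    (hd : ∀ d ∈ P.darts, ∃ Q : K.Walk d.toProd.1 d.toProd.2,
      wWalk w Q ≤ c * w d.toProd.1 d.toProd.2) :
    ∃ Q : K.Walk a b, wWalk w Q ≤ c * wWalk w P := by
  induction P with
  | nil => exact ⟨Walk.nil, by simp [wWalk]⟩
  | @cons a a' b h P ih =>
    obtain ⟨Q1, hQ1⟩ := hd ⟨(a, a'), h⟩ (by rw [Walk.darts_cons]; exact List.mem_cons_self)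
    obtain ⟨Q2, hQ2⟩ := ih fun d hdm => hd d (by rw [Walk.darts_cons]; exact List.mem_cons_of_mem _ hdm)
    refine ⟨Q1.append Q2, ?_⟩
    rw [wWalk_append, wWalk_cons]
    nlinarith [hQ1, hQ2]

set_option maxHeartbeats 1000000 in
/-- replacing the pruned set `F_old` by `F_new` in the spanner `H`
keeps the stretch bounded by `1 + 11δ`. -/
theorem statement5 (G : SimpleGraph V) (w : V → V → ℝ)
    (hw : ∀ a b, w a b = w b a)
    (hint : ∀ u v : V, G.Adj u v → ∃ m : ℕ, 1 ≤ m ∧ w u v = m)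
    (ε δ : ℝ) (hε0 : 0 < ε) (hεδ : ε ≤ δ) (hδ : δ ≤ 1/100)
    (H : SimpleGraph V) (hH : IsSpanner G w H (1 + δ))
    (Fold Fnew : Set (Sym2 V)) (hFold : Fold ⊆ H.edgeSet) (hFnew : Fnew ⊆ G.edgeSet)
    (hrepl : ∀ u v : V, s(u, v) ∈ Fold →
      ∃ (x y : V) (γ : G.Walk x y),
        (∀ e ∈ γ.edges, e ∈ Fnew) ∧
        w u v / (3 * (1 + ε)) ≤ wWalk w γ ∧
        gdist G w u x + (wWalk w γ : EReal) + gdist G w y v ≤ (((1 + ε) * w u v : ℝ) : EReal)) :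
    ∀ s t : V,
      gdist (SimpleGraph.fromEdgeSet (Fnew ∪ (H.edgeSet \ Fold))) w s t
        ≤ ((1 + 11 * δ : ℝ) : EReal) * gdist G w s t := by
  classical
  set H₁ := SimpleGraph.fromEdgeSet (Fnew ∪ (H.edgeSet \ Fold)) with hH₁
  have h1G : ∀ a b, G.Adj a b → (1:ℝ) ≤ w a b := by
    intro a b h
    obtain ⟨m, hm1, hm⟩ := hint a b h
    rw [hm]; exact_mod_cast hm1
  have hposG : ∀ a b, G.Adj a b → (0:ℝ) ≤ w a b := fun a b h => le_trans zero_le_one (h1G a b h)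
  have hintH : ∀ a b, H.Adj a b → ∃ m : ℕ, 1 ≤ m ∧ w a b = m := fun a b h => hint a b (hH.1 h)
  have hposH : ∀ a b, H.Adj a b → (0:ℝ) ≤ w a b := fun a b h => hposG a b (hH.1 h)
  have hδ0 : (0:ℝ) ≤ δ := le_trans hε0.le hεδ
  have hε1 : ε ≤ 1/100 := hεδ.trans hδ
  have hεpos : (0:ℝ) < 1 + ε := by linarith
  set c : ℝ := (1 + 11*δ) * (1 + ε) - 11*δ / (3*(1+ε)) with hc
  have hdivle : 11*δ / (3*(1+ε)) ≤ 11*δ/3 := by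
    apply div_le_div_of_nonneg_left (by linarith) (by norm_num) (by linarith)
  have hdivge : (1100/303) * δ ≤ 11*δ / (3*(1+ε)) := by
    rw [le_div_iff₀ (by positivity : (0:ℝ) < 3*(1+ε))]
    nlinarith [mul_le_mul_of_nonneg_left hε1 hδ0]
  have ht0 : (0:ℝ) ≤ 11*δ/(3*(1+ε)) := by positivity
  have h2 : δ*δ ≤ δ/100 := by nlinarith [mul_le_mul_of_nonneg_right hδ hδ0]
  have h3 : δ*δ*δ ≤ δ/10000 := by nlinarith [mul_le_mul_of_nonneg_right h2 hδ0, h2]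
  have hεd : ε*δ ≤ δ*δ := mul_le_mul_of_nonneg_right hεδ hδ0
  have hεdd : ε*δ*δ ≤ δ*δ*δ := mul_le_mul_of_nonneg_right hεd hδ0
  have hc1 : 1 ≤ c := by
    rw [hc]; nlinarith [hdivle, mul_nonneg hδ0 hε0.le]
  have hcδ : c * (1 + δ) ≤ 1 + 11*δ := by
    rw [hc]
    nlinarith [hdivge, mul_nonneg ht0 hδ0, hεd, h2, h3, hεdd, hεδ]
  have hc0 : (0:ℝ) ≤ c := le_trans zero_le_one hc1
  -- key induction
  have key : ∀ n : ℕ, ∀ u v : V, gdist G w u v = (((n:ℝ)) : EReal) →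
      ∃ Q : H₁.Walk u v, wWalk w Q ≤ (1 + 11*δ) * n := by
    intro n
    induction n using Nat.strong_induction_on with
    | _ n IH =>
      intro u v hn
      have hsp := hH.2 u v
      rw [hn, ← EReal.coe_mul] at hsp
      have hneH : Nonempty (H.Walk u v) := by
        by_contra hne
        rw [not_nonempty_iff] at hne
        rw [gdist, iInf_of_empty] at hsp
        exact (EReal.coe_lt_top _).not_ge hsp
      obtain ⟨m, P, hPm, hPmin, hHg⟩ := gdist_attained hintH hneH
      have hm : (m:ℝ) ≤ (1+δ) * n := by
        rw [hHg] at hsp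
        exact_mod_cast hsp
      have hn0 : (0:ℝ) ≤ (n:ℝ) := Nat.cast_nonneg n
      have hd : ∀ d ∈ P.darts, ∃ Q : H₁.Walk d.toProd.1 d.toProd.2,
          wWalk w Q ≤ c * w d.toProd.1 d.toProd.2 := by
        intro d hdmem
        have hadj : H.Adj d.toProd.1 d.toProd.2 := d.adj
        have hWle : w d.toProd.1 d.toProd.2 ≤ (m:ℝ) := by
          have := le_wWalk_of_dart hposH P hdmem
          rwa [hPm] at this
        have hW1 : (1:ℝ) ≤ w d.toProd.1 d.toProd.2 := h1G _ _ (hH.1 hadj)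
        by_cases hFo : s(d.toProd.1, d.toProd.2) ∈ Fold
        · -- replaced edge
          obtain ⟨x, y, γ, hγF, hγw, hγd⟩ := hrepl _ _ hFo
          set a := d.toProd.1
          set b := d.toProd.2
          set W := w a b with hWdef
          have hγH₁ : ∀ e ∈ γ.edges, e ∈ H₁.edgeSet := by
            intro e he
            rw [hH₁, SimpleGraph.edgeSet_fromEdgeSet]
            exact ⟨Or.inl (hγF e he), G.not_isDiag_of_mem_edgeSet (hFnew (hγF e he))⟩
          have hγ0 : (0:ℝ) ≤ wWalk w γ := wWalk_nonneg hposG γ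
          have hax0 := gdist_nonneg' hposG a x
          have hyb0 := gdist_nonneg' hposG y b
          have haxb : gdist G w a x ≠ ⊥ := fun hb => by simp [hb] at hax0
          have hybb : gdist G w y b ≠ ⊥ := fun hb => by simp [hb] at hyb0
          have hne1 : Nonempty (G.Walk a x) := by
            by_contra h
            rw [not_nonempty_iff] at h
            have hteq : gdist G w a x = ⊤ := by
              rw [gdist]; exact iInf_of_empty _
            rw [hteq, EReal.top_add_coe, EReal.top_add_of_ne_bot hybb] at hγd
            exact (EReal.coe_lt_top _).not_ge hγd
          have hne2 : Nonempty (G.Walk y b) := by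
            by_contra h
            rw [not_nonempty_iff] at h
            have hteq : gdist G w y b = ⊤ := by
              rw [gdist]; exact iInf_of_empty _
            have hsumnb : gdist G w a x + (wWalk w γ : EReal) ≠ ⊥ := by
              intro hb
              have h0 : (0:EReal) + (wWalk w γ : EReal) ≤ gdist G w a x + (wWalk w γ : EReal) :=
                add_le_add_left hax0 _
              rw [hb, zero_add] at h0
              exact (EReal.bot_lt_coe _).not_ge h0
            rw [hteq, EReal.add_top_of_ne_bot hsumnb] at hγd
            exact (EReal.coe_lt_top _).not_ge hγd
          obtain ⟨n₁, p₁, _, _, hg1⟩ := gdist_attained hint hne1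
          obtain ⟨n₂, p₂, _, _, hg2⟩ := gdist_attained hint hne2
          rw [hg1, hg2, ← EReal.coe_add, ← EReal.coe_add] at hγd
          have hsum : (n₁:ℝ) + wWalk w γ + (n₂:ℝ) ≤ (1+ε) * W := by exact_mod_cast hγd
          have hγmul : W ≤ wWalk w γ * (3*(1+ε)) := by
            rw [div_le_iff₀ (by positivity)] at hγw
            exact hγw
          have hn1r0 : (0:ℝ) ≤ (n₁:ℝ) := Nat.cast_nonneg n₁
          have hn2r0 : (0:ℝ) ≤ (n₂:ℝ) := Nat.cast_nonneg n₂
          have hWn : W ≤ (1+δ) * n := le_trans hWle hm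
          have hWn' : W ≤ (101/100) * n := by
            nlinarith [mul_le_mul_of_nonneg_right hδ hn0]
          have hnpos : (1:ℝ) ≤ (n:ℝ) := by
            have hne0 : n ≠ 0 := by
              rintro rfl
              norm_num at hWn'
              linarith
            exact_mod_cast Nat.one_le_iff_ne_zero.mpr hne0
          have hstep : ∀ k : ℝ, 0 ≤ k → k + wWalk w γ ≤ (1+ε) * W →
              3*(1+ε)*k ≤ (3*(1+ε)^2 - 1) * W := by
            intro k hk hks
            nlinarith [mul_le_mul_of_nonneg_left hks (by positivity : (0:ℝ) ≤ 3*(1+ε)), hγmul]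
          have hlt : ∀ k : ℝ, 0 ≤ k → k + wWalk w γ ≤ (1+ε) * W → k < (n:ℝ) := by
            intro k hk hks
            have h1 := hstep k hk hks
            have hcoef : (3*(1+ε)^2 - 1) * W ≤ (20603/10000) * W := by
              nlinarith [mul_le_mul_of_nonneg_right hε1 hε0.le, sq_nonneg ε]
            have h3k : 3*k ≤ 3*(1+ε)*k := by nlinarith [mul_nonneg hε0.le hk]
            nlinarith
          have hn1lt : n₁ < n := by
            have : (n₁:ℝ) < (n:ℝ) := hlt _ hn1r0 (by linarith)
            exact_mod_cast this
          have hn2lt : n₂ < n := by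
            have : (n₂:ℝ) < (n:ℝ) := hlt _ hn2r0 (by linarith)
            exact_mod_cast this
          obtain ⟨Q1, hQ1⟩ := IH n₁ hn1lt a x hg1
          obtain ⟨Q2, hQ2⟩ := IH n₂ hn2lt y b hg2
          refine ⟨Q1.append ((γ.transfer H₁ hγH₁).append Q2), ?_⟩
          rw [wWalk_append, wWalk_append, wWalk_transfer]
          have hc3 : c * (3*(1+ε)) = (1+11*δ)*(1+ε)*(3*(1+ε)) - 11*δ := by
            rw [hc]
            field_simp
          have hc3W : c * (3*(1+ε)) * W = ((1+11*δ)*(1+ε)*(3*(1+ε)) - 11*δ) * W := by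
            rw [hc3]
          have hpos3 : (0:ℝ) < 3*(1+ε) := by positivity
          rw [← mul_le_mul_iff_of_pos_right hpos3]
          nlinarith [mul_le_mul_of_nonneg_left hsum
              (by positivity : (0:ℝ) ≤ (3*(1+ε))*(1+11*δ)),
            mul_le_mul_of_nonneg_left hγmul (by linarith : (0:ℝ) ≤ 11*δ), hc3W,
            mul_le_mul_of_nonneg_right hQ1 hpos3.le,
            mul_le_mul_of_nonneg_right hQ2 hpos3.le]
        · -- kept edge
          have hadj1 : H₁.Adj d.toProd.1 d.toProd.2 := by
            rw [hH₁, SimpleGraph.fromEdgeSet_adj]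
            exact ⟨Or.inr ⟨hadj, hFo⟩, hadj.ne⟩
          refine ⟨Walk.cons hadj1 Walk.nil, ?_⟩
          rw [wWalk_cons, wWalk_nil]
          nlinarith
      obtain ⟨Q, hQ⟩ := walk_sum c P hd
      rw [hPm] at hQ
      refine ⟨Q, hQ.trans ?_⟩
      nlinarith [mul_le_mul_of_nonneg_left hm hc0, mul_le_mul_of_nonneg_right hcδ hn0]

  intro s t
  rcases isEmpty_or_nonempty (G.Walk s t) with he | hne
  · have htop : gdist G w s t = ⊤ := by rw [gdist, iInf_of_empty]
    rw [htop, EReal.coe_mul_top_of_pos (by linarith)]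
    exact le_top
  · obtain ⟨n, p, _, _, hgn⟩ := gdist_attained hint hne
    obtain ⟨Q, hQ⟩ := key n s t hgn
    rw [hgn, ← EReal.coe_mul]
    exact le_trans (gdist_le_wWalk Q) (EReal.coe_le_coe_iff.mpr hQ)

end Paper
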